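/- Let p, q : Fin m → (Fin 3 → ℝ) be two tuples of points in ℝ³. If all pairwise dot products agree, i.e. p i ⬝ᵥ p j = q i ⬝ᵥ q j for all i, j, and in addition all scalar triple products agree, i.e. p i ⬝ᵥ (crossProduct (p j) (p l)) = q i ⬝ᵥ (crossProduct (q j) (q l)) for all i, j, l, then there exists a special orthogonal matrix R : Matrix (Fin 3) (Fin 3) ℝ (that is, Rᵀ * R = 1 and det R = 1) such that R.mulVec (p i) = q i for all i. -/

import Mathlib

open Matrix

section Helpers

/-- Dot products are preserved by matrices with `Rᵀ * R = 1`. -/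
lemma orth_mulVec_dot (R : Matrix (Fin 3) (Fin 3) ℝ) (h : Rᵀ * R = 1) (x : Fin 3 → ℝ) :
    R.mulVec x ⬝ᵥ R.mulVec x = x ⬝ᵥ x := by
  rw [dotProduct_mulVec, ← mulVec_transpose, mulVec_mulVec, h, one_mulVec,
    dotProduct_comm]

/-- The determinant of a 3×3 matrix given by rows `a` is the triple product. -/
lemma det_of_triple (a : Fin 3 → (Fin 3 → ℝ)) :
    (Matrix.of a).det = a 0 ⬝ᵥ crossProduct (a 1) (a 2) := by
  rw [triple_product_eq_det]; congr 1; ext i j; fin_cases i <;> rfl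

/-- Lagrange's identity. -/
lemma lagrange (u v : Fin 3 → ℝ) :
    (crossProduct u v) ⬝ᵥ (crossProduct u v) = (u ⬝ᵥ u) * (v ⬝ᵥ v) - (u ⬝ᵥ v) ^ 2 := by
  simp [cross_apply, dotProduct, Fin.sum_univ_three]; ring

lemma triple2 (u v : Fin 3 → ℝ) :
    u ⬝ᵥ (crossProduct v (crossProduct u v)) = (crossProduct u v) ⬝ᵥ (crossProduct u v) := by
  simp [cross_apply, dotProduct, Fin.sum_univ_three]; ring

lemma parallel (u v : Fin 3 → ℝ) (h : crossProduct u v = 0) :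
    (u ⬝ᵥ u) • v = (u ⬝ᵥ v) • u := by
  have h0 := congrFun h 0
  have h1 := congrFun h 1
  have h2 := congrFun h 2
  simp [cross_apply] at h0 h1 h2
  funext k
  fin_cases k <;> simp [dotProduct, Fin.sum_univ_three]
  · linear_combination (-(u 1)) * h2 + u 2 * h1
  · linear_combination u 0 * h2 - u 2 * h0
  · linear_combination (-(u 0)) * h1 + u 1 * h0

lemma exists_cross_ne (u : Fin 3 → ℝ) (hu : u ≠ 0) : ∃ v, crossProduct u v ≠ 0 := by
  by_contra hc
  push_neg at hc
  apply hu
  have h0 := hc ![1,0,0]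
  have h1 := hc ![0,1,0]
  have e00 := congrFun h0 1
  have e01 := congrFun h0 2
  have e10 := congrFun h1 0
  have e11 := congrFun h1 2
  simp [cross_apply] at e00 e01 e10 e11
  funext k
  fin_cases k <;> simp_all

lemma dot_self_nonneg (v : Fin 3 → ℝ) : 0 ≤ v ⬝ᵥ v := by
  simp only [dotProduct, Fin.sum_univ_three]
  nlinarith [sq_nonneg (v 0), sq_nonneg (v 1), sq_nonneg (v 2)]

/-- Any nonzero vector extends to a positively oriented "frame". -/
lemma frame (u : Fin 3 → ℝ) (hu : u ≠ 0) :
    ∃ n2 n3 : Fin 3 → ℝ, (u ⬝ᵥ n2 = 0) ∧ (u ⬝ᵥ n3 = 0) ∧ (n2 ⬝ᵥ n3 = 0) ∧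
      (n2 ⬝ᵥ n2 = 1) ∧ (n3 ⬝ᵥ n3 = 1) ∧
      ((Matrix.of ![u, n2, n3]).det = Real.sqrt (u ⬝ᵥ u)) ∧
      (∀ x, crossProduct u x = 0 → n2 ⬝ᵥ x = 0 ∧ n3 ⬝ᵥ x = 0) := by
  have huu : u ⬝ᵥ u ≠ 0 := fun h => hu (dotProduct_self_eq_zero.mp h)
  have hupos : 0 < u ⬝ᵥ u := lt_of_le_of_ne (dot_self_nonneg u) (Ne.symm huu)
  obtain ⟨v, hv⟩ := exists_cross_ne u hu
  have hww : crossProduct u v ⬝ᵥ crossProduct u v ≠ 0 :=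
    fun h => hv (dotProduct_self_eq_zero.mp h)
  have hwpos : 0 < crossProduct u v ⬝ᵥ crossProduct u v :=
    lt_of_le_of_ne (dot_self_nonneg _) (Ne.symm hww)
  set s := Real.sqrt (crossProduct u v ⬝ᵥ crossProduct u v) with hs_def
  have hs : s ≠ 0 := Real.sqrt_ne_zero'.mpr hwpos
  have hs2 : s * s = crossProduct u v ⬝ᵥ crossProduct u v := Real.mul_self_sqrt hwpos.le
  set t := Real.sqrt (u ⬝ᵥ u) with ht_def
  have ht : t ≠ 0 := Real.sqrt_ne_zero'.mpr hupos
  have ht2 : t * t = u ⬝ᵥ u := Real.mul_self_sqrt hupos.le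
  refine ⟨s⁻¹ • crossProduct u v, t⁻¹ • crossProduct u (s⁻¹ • crossProduct u v),
    ?_, ?_, ?_, ?_, ?_, ?_, ?_⟩
  case _ =>
    rw [dotProduct_smul, dot_self_cross, smul_zero]
  case _ =>
    rw [dotProduct_smul, dot_self_cross, smul_zero]
  case _ =>
    rw [dotProduct_smul, dot_cross_self, smul_zero]
  case _ =>
    rw [smul_dotProduct, dotProduct_smul, smul_eq_mul, smul_eq_mul, ← hs2]
    field_simp
  case _ =>
    have hz : crossProduct u (s⁻¹ • crossProduct u v) ⬝ᵥ
        crossProduct u (s⁻¹ • crossProduct u v) = u ⬝ᵥ u := by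
      rw [lagrange]
      have e1 : (s⁻¹ • crossProduct u v) ⬝ᵥ (s⁻¹ • crossProduct u v) = 1 := by
        rw [smul_dotProduct, dotProduct_smul, smul_eq_mul, smul_eq_mul, ← hs2]
        field_simp
      have e2 : u ⬝ᵥ (s⁻¹ • crossProduct u v) = 0 := by
        rw [dotProduct_smul, dot_self_cross, smul_zero]
      rw [e1, e2]
      ring
    rw [smul_dotProduct, dotProduct_smul, smul_eq_mul, smul_eq_mul, hz, ← ht2]
    field_simp
  case _ =>
    rw [det_of_triple]
    show u ⬝ᵥ crossProduct (s⁻¹ • crossProduct u v)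
      (t⁻¹ • crossProduct u (s⁻¹ • crossProduct u v)) = t
    rw [_root_.map_smul, dotProduct_smul, triple2, lagrange]
    have e1 : (s⁻¹ • crossProduct u v) ⬝ᵥ (s⁻¹ • crossProduct u v) = 1 := by
      rw [smul_dotProduct, dotProduct_smul, smul_eq_mul, smul_eq_mul, ← hs2]
      field_simp
    have e2 : u ⬝ᵥ (s⁻¹ • crossProduct u v) = 0 := by
      rw [dotProduct_smul, dot_self_cross, smul_zero]
    rw [e1, e2, smul_eq_mul, ← ht2]
    field_simp
    ring
  case _ =>
    intro x hx
    have hp := parallel u x hx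
    constructor
    · have h := congrArg (fun y => (s⁻¹ • crossProduct u v) ⬝ᵥ y) hp
      simp only [dotProduct_smul, smul_eq_mul] at h
      have h2 : (s⁻¹ • crossProduct u v) ⬝ᵥ u = 0 := by
        rw [dotProduct_comm, dotProduct_smul, dot_self_cross, smul_zero]
      rw [h2, mul_zero] at h
      exact (mul_eq_zero.mp h).resolve_left huu
    · have h := congrArg (fun y =>
        (t⁻¹ • crossProduct u (s⁻¹ • crossProduct u v)) ⬝ᵥ y) hp
      simp only [dotProduct_smul, smul_eq_mul] at h
      have h2 : (t⁻¹ • crossProduct u (s⁻¹ • crossProduct u v)) ⬝ᵥ u = 0 := by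
        rw [dotProduct_comm, dotProduct_smul, dot_self_cross, smul_zero]
      rw [h2, mul_zero] at h
      exact (mul_eq_zero.mp h).resolve_left huu

/-- The key lemma: given "frames" `a`, `b` on each side with equal Gram
matrices, equal nonzero determinants and matching dot products against the
two families, the matrix `B * A⁻¹` is special orthogonal and works. -/
lemma key_lemma {m : ℕ} (p q : Fin m → (Fin 3 → ℝ)) (a b : Fin 3 → (Fin 3 → ℝ))
    (hG : ∀ k l, a k ⬝ᵥ a l = b k ⬝ᵥ b l)
    (hdet : (Matrix.of a).det = (Matrix.of b).det)
    (hne : (Matrix.of a).det ≠ 0)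
    (hC : ∀ i k, a k ⬝ᵥ p i = b k ⬝ᵥ q i)
    (hn : ∀ i, p i ⬝ᵥ p i = q i ⬝ᵥ q i) :
    ∃ R : Matrix (Fin 3) (Fin 3) ℝ, Rᵀ * R = 1 ∧ R.det = 1 ∧
      ∀ i, R.mulVec (p i) = q i := by
  set A : Matrix (Fin 3) (Fin 3) ℝ := (Matrix.of a)ᵀ with hA
  set B : Matrix (Fin 3) (Fin 3) ℝ := (Matrix.of b)ᵀ with hB
  have hAdet : A.det = (Matrix.of a).det := det_transpose _
  have hBdet : B.det = (Matrix.of b).det := det_transpose _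
  have hAne : A.det ≠ 0 := by rw [hAdet]; exact hne
  have hAu : IsUnit A.det := isUnit_iff_ne_zero.mpr hAne
  have hAAinv : A * A⁻¹ = 1 := mul_nonsing_inv A hAu
  have hGm : Aᵀ * A = Bᵀ * B := by
    ext k l
    have h1 : ∀ (c : Fin 3 → (Fin 3 → ℝ)),
        (((Matrix.of c)ᵀ)ᵀ * (Matrix.of c)ᵀ) k l = c k ⬝ᵥ c l := by
      intro c
      simp [Matrix.mul_apply, dotProduct]
    rw [hA, hB, h1 a, h1 b, hG]
  have hortho : (B * A⁻¹)ᵀ * (B * A⁻¹) = 1 := by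
    have e1 : (B * A⁻¹)ᵀ * (B * A⁻¹) = (A⁻¹)ᵀ * ((Bᵀ * B) * A⁻¹) := by
      rw [transpose_mul]
      rw [Matrix.mul_assoc, Matrix.mul_assoc]
    rw [e1, ← hGm, Matrix.mul_assoc Aᵀ A A⁻¹, hAAinv, Matrix.mul_one,
      ← transpose_mul, hAAinv, transpose_one]
  refine ⟨B * A⁻¹, hortho, ?_, ?_⟩
  · rw [det_mul, det_nonsing_inv, Ring.inverse_eq_inv, hBdet, ← hdet, ← hAdet,
      mul_inv_cancel₀ hAne]
  · intro i
    have hBy : Matrix.of b *ᵥ q i = Matrix.of a *ᵥ p i := by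
      funext k
      have hb : (Matrix.of b *ᵥ q i) k = b k ⬝ᵥ q i := rfl
      have ha : (Matrix.of a *ᵥ p i) k = a k ⬝ᵥ p i := rfl
      rw [hb, ha, hC]
    have h2 : q i ⬝ᵥ (B * A⁻¹).mulVec (p i) = p i ⬝ᵥ p i := by
      rw [← mulVec_mulVec, dotProduct_mulVec (q i) B, hB, vecMul_transpose, hBy,
        ← vecMul_transpose, ← hA, ← dotProduct_mulVec, mulVec_mulVec, hAAinv, one_mulVec]
    have h1 := orth_mulVec_dot (B * A⁻¹) hortho (p i)
    have hz : (q i - (B * A⁻¹).mulVec (p i)) ⬝ᵥ (q i - (B * A⁻¹).mulVec (p i)) = 0 := by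
      rw [sub_dotProduct, dotProduct_sub, dotProduct_sub, h1, h2,
        dotProduct_comm ((B * A⁻¹).mulVec (p i)) (q i), h2, hn i]
      ring
    exact (sub_eq_zero.mp (dotProduct_self_eq_zero.mp hz)).symm

end Helpers

/-- If two tuples of points in `ℝ³` have the same pairwise dot products and
the same scalar triple products, then there is a special orthogonal matrix
mapping one tuple to the other. -/
theorem exists_specialOrthogonal_of_dotProduct_tripleProduct_eq {m : ℕ}
    (p q : Fin m → (Fin 3 → ℝ))
    (hdot : ∀ i j, p i ⬝ᵥ p j = q i ⬝ᵥ q j)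
    (htriple : ∀ i j l, p i ⬝ᵥ (crossProduct (p j) (p l)) =
      q i ⬝ᵥ (crossProduct (q j) (q l))) :
    ∃ R : Matrix (Fin 3) (Fin 3) ℝ, Rᵀ * R = 1 ∧ R.det = 1 ∧
      ∀ i, R.mulVec (p i) = q i := by
  by_cases h3 : ∃ i j l, p i ⬝ᵥ (crossProduct (p j) (p l)) ≠ 0
  · -- rank 3 case
    obtain ⟨i1, i2, i3, hne⟩ := h3
    apply key_lemma p q ![p i1, p i2, p i3] ![q i1, q i2, q i3]
    · intro k l
      fin_cases k <;> fin_cases l <;> simpa using hdot _ _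
    · rw [det_of_triple, det_of_triple]
      simpa using htriple i1 i2 i3
    · rw [det_of_triple]
      simpa using hne
    · intro i k
      fin_cases k <;> simpa using hdot _ i
    · intro i; exact hdot i i
  by_cases h2 : ∃ i j, crossProduct (p i) (p j) ≠ 0
  · -- rank 2 case
    obtain ⟨i1, i2, hcne⟩ := h2
    have hnn : crossProduct (p i1) (p i2) ⬝ᵥ crossProduct (p i1) (p i2)
        = crossProduct (q i1) (q i2) ⬝ᵥ crossProduct (q i1) (q i2) := by
      rw [lagrange, lagrange, hdot i1 i1, hdot i2 i2, hdot i1 i2]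
    have hnnne : crossProduct (p i1) (p i2) ⬝ᵥ crossProduct (p i1) (p i2) ≠ 0 :=
      fun h => hcne (dotProduct_self_eq_zero.mp h)
    apply key_lemma p q ![p i1, p i2, crossProduct (p i1) (p i2)]
      ![q i1, q i2, crossProduct (q i1) (q i2)]
    · intro k l
      fin_cases k <;> fin_cases l
      · exact hdot i1 i1
      · exact hdot i1 i2
      · show p i1 ⬝ᵥ crossProduct (p i1) (p i2) = q i1 ⬝ᵥ crossProduct (q i1) (q i2)
        rw [dot_self_cross, dot_self_cross]
      · exact hdot i2 i1
      · exact hdot i2 i2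
      · show p i2 ⬝ᵥ crossProduct (p i1) (p i2) = q i2 ⬝ᵥ crossProduct (q i1) (q i2)
        rw [dot_cross_self, dot_cross_self]
      · show crossProduct (p i1) (p i2) ⬝ᵥ p i1 = crossProduct (q i1) (q i2) ⬝ᵥ q i1
        rw [dotProduct_comm, dotProduct_comm (crossProduct (q i1) (q i2)),
          dot_self_cross, dot_self_cross]
      · show crossProduct (p i1) (p i2) ⬝ᵥ p i2 = crossProduct (q i1) (q i2) ⬝ᵥ q i2
        rw [dotProduct_comm, dotProduct_comm (crossProduct (q i1) (q i2)),
          dot_cross_self, dot_cross_self]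
      · exact hnn
    · rw [det_of_triple, det_of_triple]
      show p i1 ⬝ᵥ crossProduct (p i2) (crossProduct (p i1) (p i2))
        = q i1 ⬝ᵥ crossProduct (q i2) (crossProduct (q i1) (q i2))
      rw [triple2, triple2, hnn]
    · rw [det_of_triple]
      show p i1 ⬝ᵥ crossProduct (p i2) (crossProduct (p i1) (p i2)) ≠ 0
      rw [triple2]
      exact hnnne
    · intro i k
      fin_cases k
      · exact hdot i1 i
      · exact hdot i2 i
      · show crossProduct (p i1) (p i2) ⬝ᵥ p i = crossProduct (q i1) (q i2) ⬝ᵥ q i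
        rw [dotProduct_comm, dotProduct_comm _ (q i)]
        exact htriple i i1 i2
    · intro i; exact hdot i i
  by_cases h1 : ∃ i, p i ≠ 0
  · -- rank 1 case
    obtain ⟨i0, h0⟩ := h1
    push_neg at h2
    have h0' : q i0 ≠ 0 := by
      intro h
      apply h0
      apply dotProduct_self_eq_zero.mp
      rw [hdot i0 i0, h]
      simp
    have hqcross : ∀ i j, crossProduct (q i) (q j) = 0 := by
      intro i j
      apply dotProduct_self_eq_zero.mp
      rw [lagrange, ← hdot i i, ← hdot j j, ← hdot i j, ← lagrange, h2 i j]
      simp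
    obtain ⟨n2, n3, hun2, hun3, hn23, hn22, hn33, hdetp, horthp⟩ := frame (p i0) h0
    obtain ⟨n2', n3', hun2', hun3', hn23', hn22', hn33', hdetq, horthq⟩ := frame (q i0) h0'
    apply key_lemma p q ![p i0, n2, n3] ![q i0, n2', n3']
    · intro k l
      fin_cases k <;> fin_cases l
      · exact hdot i0 i0
      · show p i0 ⬝ᵥ n2 = q i0 ⬝ᵥ n2'
        rw [hun2, hun2']
      · show p i0 ⬝ᵥ n3 = q i0 ⬝ᵥ n3'
        rw [hun3, hun3']
      · show n2 ⬝ᵥ p i0 = n2' ⬝ᵥ q i0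
        rw [dotProduct_comm, dotProduct_comm n2', hun2, hun2']
      · show n2 ⬝ᵥ n2 = n2' ⬝ᵥ n2'
        rw [hn22, hn22']
      · show n2 ⬝ᵥ n3 = n2' ⬝ᵥ n3'
        rw [hn23, hn23']
      · show n3 ⬝ᵥ p i0 = n3' ⬝ᵥ q i0
        rw [dotProduct_comm, dotProduct_comm n3', hun3, hun3']
      · show n3 ⬝ᵥ n2 = n3' ⬝ᵥ n2'
        rw [dotProduct_comm, dotProduct_comm n3', hn23, hn23']
      · show n3 ⬝ᵥ n3 = n3' ⬝ᵥ n3'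
        rw [hn33, hn33']
    · rw [hdetp, hdetq, hdot i0 i0]
    · rw [hdetp]
      have huu : p i0 ⬝ᵥ p i0 ≠ 0 := fun h => h0 (dotProduct_self_eq_zero.mp h)
      have hupos : 0 < p i0 ⬝ᵥ p i0 :=
        lt_of_le_of_ne (dot_self_nonneg _) (Ne.symm huu)
      exact Real.sqrt_ne_zero'.mpr hupos
    · intro i k
      fin_cases k
      · exact hdot i0 i
      · show n2 ⬝ᵥ p i = n2' ⬝ᵥ q i
        rw [(horthp (p i) (h2 i0 i)).1, (horthq (q i) (hqcross i0 i)).1]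
      · show n3 ⬝ᵥ p i = n3' ⬝ᵥ q i
        rw [(horthp (p i) (h2 i0 i)).2, (horthq (q i) (hqcross i0 i)).2]
    · intro i; exact hdot i i
  · -- all points are zero
    push_neg at h1
    refine ⟨1, by simp, by simp, ?_⟩
    intro i
    have hq : q i = 0 := by
      apply dotProduct_self_eq_zero.mp
      rw [← hdot i i, h1 i]
      simp
    rw [one_mulVec, h1 i, hq]
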